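/- Let ‖·‖ be a norm on c₀₀ satisfying equation (2.2). Let n ∈ ℕ and let (x_i)_{i=1}^n be a block basis of (e_i) such that each x_i is an ℓ₁^{k_i}-average with constant 2, for some k₁,…,k_n ∈ ℕ, and set k₀ = min{k_i : 1 ≤ i ≤ n}. Then for every ℓ ∈ ℕ and all scalars (a_i)_{i=1}^n ⊆ [−1,1], ‖∑_{i=1}^n a_i x_i‖_ℓ ≤ (1/f(ℓ)) · [ ‖∑_{i=1}^n a_i x_i‖ + 6ℓn·k₀^{−1/2} ]. -/

import Mathlib

open Finset

/-- `c₀₀`: finitely supported functions `ℕ → ℝ`. -/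
abbrev C00 := ℕ →₀ ℝ

/-- `f(t) = log₂(1+t)`. -/
noncomputable def f (t : ℝ) : ℝ := Real.logb 2 (1 + t)

/-- `E < F` for finite sets: every element of `E` is less than every element of `F`. -/
def FinsetLT (E F : Finset ℕ) : Prop := ∀ i ∈ E, ∀ j ∈ F, i < j

/-- `Ex`: coordinatewise product of `x` with the indicator of `E`. -/
noncomputable def restr (E : Finset ℕ) (x : C00) : C00 := x.filter (· ∈ E)

/-- `N` is a norm on `c₀₀`. -/
def IsNorm (N : C00 → ℝ) : Prop :=
  (∀ x y, N (x + y) ≤ N x + N y) ∧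
  (∀ (c : ℝ) (x), N (c • x) = |c| * N x) ∧
  (∀ x, x ≠ 0 → 0 < N x)

/-- the sup norm `‖x‖_∞`. -/
noncomputable def supNorm (x : C00) : ℝ := ⨆ i, |x i|

/-- `((m_i, E_i))_{i=1}^ℓ` is admissible: `2 ≤ m₁ < ⋯ < m_ℓ`, `E₁ < ⋯ < E_ℓ`,
and `f(m_{i+1}) > ∑_{j=1}^i |E_j|`. -/
def Admissible (ℓ : ℕ) (m : Fin ℓ → ℕ) (E : Fin ℓ → Finset ℕ) : Prop :=
  (∀ i, 2 ≤ m i) ∧ StrictMono m ∧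
  (∀ i j : Fin ℓ, i < j → FinsetLT (E i) (E j)) ∧
  ∀ i j : Fin ℓ, (i : ℕ) + 1 = (j : ℕ) →
    (∑ t ∈ Finset.Iic i, ((E t).card : ℝ)) < f (m j)

/-- `|||x|||_m = sup{(1/m) ∑_{i=1}^m ‖F_i x‖ : F₁ < ⋯ < F_m}`. -/
noncomputable def tnorm (N : C00 → ℝ) (m : ℕ) (x : C00) : ℝ :=
  sSup {r | ∃ F : Fin m → Finset ℕ,
    (∀ i j : Fin m, i < j → FinsetLT (F i) (F j)) ∧
    r = (1 / (m : ℝ)) * ∑ i, N (restr (F i) x)}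

/-- `‖x‖_ℓ = sup{(1/f(ℓ)) ∑_{i=1}^ℓ |||E_i x|||_{m_i} : ((m_i,E_i))_{i=1}^ℓ admissible}`. -/
noncomputable def normL (N : C00 → ℝ) (ℓ : ℕ) (x : C00) : ℝ :=
  sSup {r | ∃ (m : Fin ℓ → ℕ) (E : Fin ℓ → Finset ℕ), Admissible ℓ m E ∧
    r = (1 / f ℓ) * ∑ i, tnorm N (m i) (restr (E i) x)}

/-- `‖x‖_{(ℓ,m₀)}`: as `‖x‖_ℓ` but restricted to admissible families with `m₁ ≥ m₀`. -/
noncomputable def normLM (N : C00 → ℝ) (ℓ m₀ : ℕ) (x : C00) : ℝ :=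
  sSup {r | ∃ (m : Fin ℓ → ℕ) (E : Fin ℓ → Finset ℕ), Admissible ℓ m E ∧
    (∀ i, m₀ ≤ m i) ∧
    r = (1 / f ℓ) * ∑ i, tnorm N (m i) (restr (E i) x)}

/-- Equation (2.2):
`‖x‖ = max{‖x‖_∞, sup{(1/f(ℓ)) ∑ |||E_i x|||_{m_i} : ℓ ∈ ℕ, ((m_i,E_i)) admissible}}`. -/
def Eq22 (N : C00 → ℝ) : Prop :=
  ∀ x, N x = max (supNorm x)
    (sSup {r | ∃ (ℓ : ℕ) (m : Fin ℓ → ℕ) (E : Fin ℓ → Finset ℕ), Admissible ℓ m E ∧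
      r = (1 / f ℓ) * ∑ i, tnorm N (m i) (restr (E i) x)})

/-- A finite block basis: nonzero vectors with successive supports. -/
def BlockSeqFin {n : ℕ} (y : Fin n → C00) : Prop :=
  (∀ i, y i ≠ 0) ∧ ∀ i j : Fin n, i < j → FinsetLT (y i).support (y j).support

/-- An infinite block basis of `(e_i)`: nonzero vectors with successive supports. -/
def BlockSeqInf (y : ℕ → C00) : Prop :=
  (∀ i, y i ≠ 0) ∧ ∀ i, FinsetLT (y i).support (y (i + 1)).support

/-- `(z_k)_{k=1}^n` is a (finite) block basis of `(y_i)`. -/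
def FiniteBlockOf {n : ℕ} (z : Fin n → C00) (y : ℕ → C00) : Prop :=
  ∃ (B : Fin n → Finset ℕ) (c : ℕ → ℝ),
    (∀ k k' : Fin n, k < k' → FinsetLT (B k) (B k')) ∧
    (∀ k, z k = ∑ i ∈ B k, c i • y i) ∧ ∀ k, z k ≠ 0

/-- `x` is an `ℓ_p^k`-average with constant `C`. -/
def IsLpAverage (N : C00 → ℝ) (p : ℝ) (k : ℕ) (C : ℝ) (x : C00) : Prop :=
  ∃ y : Fin k → C00, BlockSeqFin y ∧ (∀ i, N (y i) = 1) ∧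
    (∀ a : Fin k → ℝ,
      C⁻¹ * (∑ i, |a i| ^ p) ^ (1 / p) ≤ N (∑ i, a i • y i) ∧
      N (∑ i, a i • y i) ≤ C * (∑ i, |a i| ^ p) ^ (1 / p)) ∧
    x = ((k : ℝ) ^ (-(1 / p))) • ∑ i, y i

/-- `C_p = 4(1 - 2^{-1/p})⁻¹`. -/
noncomputable def Cp (p : ℝ) : ℝ := 4 * (1 - (2 : ℝ) ^ (-(1 / p)))⁻¹

section basics
variable {N : C00 → ℝ} (hN : IsNorm N)

lemma restr_apply (E : Finset ℕ) (x : C00) (j : ℕ) :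
    restr E x j = if j ∈ E then x j else 0 := Finsupp.filter_apply _ x j

lemma restr_zero (E : Finset ℕ) : restr E (0 : C00) = 0 := by
  ext j; simp [restr_apply]

lemma restr_add (E : Finset ℕ) (x y : C00) : restr E (x + y) = restr E x + restr E y := by
  ext j; simp [restr_apply]; split <;> simp

lemma restr_smul (E : Finset ℕ) (c : ℝ) (x : C00) : restr E (c • x) = c • restr E x := by
  ext j; simp only [restr_apply, Finsupp.smul_apply]; split <;> simp

lemma restr_sum {ι : Type*} (E : Finset ℕ) (s : Finset ι) (g : ι → C00) :
    restr E (∑ i ∈ s, g i) = ∑ i ∈ s, restr E (g i) := by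
  classical
  induction s using Finset.induction with
  | empty => simp [restr_zero]
  | insert _ _ h ih => rw [Finset.sum_insert h, restr_add, ih, Finset.sum_insert h]

lemma restr_restr (F E : Finset ℕ) (x : C00) : restr F (restr E x) = restr (F ∩ E) x := by
  ext j; simp [restr_apply]; split <;> simp_all

lemma restr_eq_self {E : Finset ℕ} {x : C00} (h : x.support ⊆ E) : restr E x = x := by
  ext j; rw [restr_apply]; split
  · rfl
  · rename_i hj
    by_contra hne
    exact hj (h (Finsupp.mem_support_iff.2 fun hz => hne hz.symm))

lemma restr_eq_zero {E : Finset ℕ} {x : C00} (h : ∀ j ∈ x.support, j ∉ E) : restr E x = 0 := by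
  ext j; rw [restr_apply]; split
  · rename_i hj
    by_contra hne
    exact h j (Finsupp.mem_support_iff.2 fun hz => hne (hz.trans rfl)) hj
  · rfl

lemma support_restr (E : Finset ℕ) (x : C00) :
    (restr E x).support = x.support.filter (· ∈ E) := Finsupp.support_filter _ _

lemma N_zero (hN : IsNorm N) : N 0 = 0 := by
  have := hN.2.1 0 0
  simpa using this

lemma N_nonneg (hN : IsNorm N) (x : C00) : 0 ≤ N x := by
  rcases eq_or_ne x 0 with rfl | h
  · exact le_of_eq (N_zero hN).symm
  · exact (hN.2.2 x h).le

lemma N_sum_le (hN : IsNorm N) {ι : Type*} (s : Finset ι) (g : ι → C00) :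
    N (∑ i ∈ s, g i) ≤ ∑ i ∈ s, N (g i) :=
  Finset.le_sum_of_subadditive N (N_zero hN).le hN.1 s g

lemma restr_decomp (E : Finset ℕ) (x : C00) :
    restr E x = ∑ j ∈ x.support.filter (· ∈ E), restr {j} x := by
  ext i
  rw [Finset.sum_apply']
  rw [restr_apply]
  split
  · rename_i hi
    rcases eq_or_ne (x i) 0 with h0 | h0
    · rw [h0]
      symm
      apply Finset.sum_eq_zero
      intro j hj
      rw [restr_apply]
      split
      · rename_i hij; simp at hij; subst hij; exact h0
      · rfl
    · rw [Finset.sum_eq_single i]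
      · simp [restr_apply]
      · intro j _ hji; rw [restr_apply]; simp [Ne.symm hji]
      · intro hni; exact absurd (Finset.mem_filter.2 ⟨Finsupp.mem_support_iff.2 h0, hi⟩) hni
  · rename_i hi
    symm; apply Finset.sum_eq_zero
    intro j hj
    rw [restr_apply]
    split
    · rename_i hij; simp at hij; subst hij
      exact absurd (Finset.mem_filter.1 hj).2 hi
    · rfl

end basics

section two
variable {N : C00 → ℝ}

/-- the per-coordinate total mass bound. -/
noncomputable def Tf (N : C00 → ℝ) (x : C00) : ℝ := ∑ j ∈ x.support, N (restr {j} x)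

lemma Tf_nonneg (hN : IsNorm N) (x : C00) : 0 ≤ Tf N x :=
  Finset.sum_nonneg fun j _ => N_nonneg hN _

lemma N_restr_le_sum (hN : IsNorm N) (E : Finset ℕ) (x : C00) :
    N (restr E x) ≤ ∑ j ∈ x.support.filter (· ∈ E), N (restr {j} x) := by
  rw [restr_decomp E x]
  exact N_sum_le hN _ _

/-- pairwise disjoint families: the key summed bound. -/
lemma sum_restr_le_Tf (hN : IsNorm N) {ι : Type*} (s : Finset ι) (E : ι → Finset ℕ)
    (hd : ∀ i ∈ s, ∀ j ∈ s, i ≠ j → Disjoint (E i) (E j)) (x : C00) :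
    ∑ i ∈ s, N (restr (E i) x) ≤ Tf N x := by
  calc ∑ i ∈ s, N (restr (E i) x)
      ≤ ∑ i ∈ s, ∑ j ∈ x.support.filter (· ∈ E i), N (restr {j} x) :=
        Finset.sum_le_sum fun i _ => N_restr_le_sum hN _ _
    _ = ∑ j ∈ s.biUnion (fun i => x.support.filter (· ∈ E i)), N (restr {j} x) := by
        rw [Finset.sum_biUnion]
        intro i hi j hj hij
        refine Finset.disjoint_left.2 fun a ha hb => ?_
        exact (Finset.disjoint_left.1 (hd i hi j hj hij)) (Finset.mem_filter.1 ha).2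
          (Finset.mem_filter.1 hb).2
    _ ≤ Tf N x := by
        apply Finset.sum_le_sum_of_subset_of_nonneg
        · intro j hj
          rcases Finset.mem_biUnion.1 hj with ⟨i, _, hji⟩
          exact (Finset.mem_filter.1 hji).1
        · intro j _ _; exact N_nonneg hN _

end two

section three
variable {N : C00 → ℝ}

lemma finsetLT_disjoint {E F : Finset ℕ} (h : FinsetLT E F) : Disjoint E F :=
  Finset.disjoint_left.2 fun a ha hb => lt_irrefl a (h a ha a hb)

lemma pairwise_disjoint_of_LT {n : ℕ} {E : Fin n → Finset ℕ}
    (h : ∀ i j : Fin n, i < j → FinsetLT (E i) (E j)) :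
    ∀ i ∈ (Finset.univ : Finset (Fin n)), ∀ j ∈ Finset.univ, i ≠ j → Disjoint (E i) (E j) := by
  intro i _ j _ hij
  rcases lt_or_gt_of_ne hij with h' | h'
  · exact finsetLT_disjoint (h i j h')
  · exact (finsetLT_disjoint (h j i h')).symm

lemma f_nat_nonneg (ℓ : ℕ) : 0 ≤ f ℓ := by
  unfold f
  apply Real.logb_nonneg one_lt_two
  have : (0:ℝ) ≤ ℓ := Nat.cast_nonneg ℓ
  linarith

lemma f_nat_one_le {ℓ : ℕ} (h : 1 ≤ ℓ) : 1 ≤ f ℓ := by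
  unfold f
  have h1 : (1:ℝ) ≤ ℓ := by exact_mod_cast h
  have := Real.logb_le_logb_of_le one_lt_two two_pos (by linarith : (2:ℝ) ≤ 1 + ℓ)
  simpa using this

lemma one_div_f_mem {ℓ : ℕ} : 0 ≤ 1 / f ℓ ∧ 1 / f ℓ ≤ 1 := by
  constructor
  · exact div_nonneg zero_le_one (f_nat_nonneg _)
  · rcases Nat.eq_zero_or_pos ℓ with rfl | h
    · simp [f]
    · rw [div_le_one (by linarith [f_nat_one_le h])]
      linarith [f_nat_one_le h]

lemma tnorm_le_bound (hN : IsNorm N) {m : ℕ} {x : C00} {B : ℝ} (h0 : 0 ≤ B)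
    (hb : ∀ F : Fin m → Finset ℕ, (∀ i j : Fin m, i < j → FinsetLT (F i) (F j)) →
      (1 / (m : ℝ)) * ∑ i, N (restr (F i) x) ≤ B) : tnorm N m x ≤ B := by
  apply Real.sSup_le _ h0
  rintro r ⟨F, hF, rfl⟩
  exact hb F hF

lemma tnorm_le_Tf (hN : IsNorm N) (m : ℕ) (x : C00) : tnorm N m x ≤ Tf N x := by
  apply tnorm_le_bound hN (Tf_nonneg hN x)
  intro F hF
  rcases Nat.eq_zero_or_pos m with rfl | hm
  · simpa using Tf_nonneg hN x
  · have hS : ∑ i, N (restr (F i) x) ≤ Tf N x :=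
      sum_restr_le_Tf hN Finset.univ F (pairwise_disjoint_of_LT hF) x
    have hS0 : 0 ≤ ∑ i, N (restr (F i) x) :=
      Finset.sum_nonneg fun i _ => N_nonneg hN _
    have h1 : 1 / (m:ℝ) ≤ 1 := by
      rw [div_le_one (by exact_mod_cast hm)]
      exact_mod_cast hm
    calc (1 / (m:ℝ)) * ∑ i, N (restr (F i) x)
        ≤ 1 * ∑ i, N (restr (F i) x) := mul_le_mul_of_nonneg_right h1 hS0
      _ ≤ Tf N x := by rw [one_mul]; exact hS

lemma Tf_restr (N : C00 → ℝ) (E : Finset ℕ) (x : C00) :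
    Tf N (restr E x) = ∑ j ∈ x.support.filter (· ∈ E), N (restr {j} x) := by
  rw [Tf, support_restr]
  refine Finset.sum_congr rfl fun j hj => ?_
  rw [restr_restr, Finset.singleton_inter_of_mem (Finset.mem_filter.1 hj).2]

lemma sum_Tf_restr_le (hN : IsNorm N) {n : ℕ} (E : Fin n → Finset ℕ)
    (h : ∀ i j : Fin n, i < j → FinsetLT (E i) (E j)) (x : C00) :
    ∑ i, Tf N (restr (E i) x) ≤ Tf N x := by
  have hd := pairwise_disjoint_of_LT h
  calc ∑ i, Tf N (restr (E i) x)
      = ∑ i, ∑ j ∈ x.support.filter (· ∈ E i), N (restr {j} x) :=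
        Finset.sum_congr rfl fun i _ => Tf_restr N (E i) x
    _ = ∑ j ∈ Finset.univ.biUnion (fun i => x.support.filter (· ∈ E i)), N (restr {j} x) := by
        rw [Finset.sum_biUnion]
        intro i hi j hj hij
        refine Finset.disjoint_left.2 fun a ha hb => ?_
        exact (Finset.disjoint_left.1 (hd i hi j hj hij)) (Finset.mem_filter.1 ha).2
          (Finset.mem_filter.1 hb).2
    _ ≤ Tf N x := by
        apply Finset.sum_le_sum_of_subset_of_nonneg
        · intro j hj
          rcases Finset.mem_biUnion.1 hj with ⟨i, _, hji⟩
          exact (Finset.mem_filter.1 hji).1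
        · intro j _ _; exact N_nonneg hN _

/-- every element of the global Eq22 set is at most `Tf N x`. -/
lemma global_le_Tf (hN : IsNorm N) (x : C00) :
    ∀ r ∈ {r | ∃ (ℓ : ℕ) (m : Fin ℓ → ℕ) (E : Fin ℓ → Finset ℕ), Admissible ℓ m E ∧
      r = (1 / f ℓ) * ∑ i, tnorm N (m i) (restr (E i) x)}, r ≤ Tf N x := by
  rintro r ⟨ℓ, m, E, hAdm, rfl⟩
  have hsum : ∑ i, tnorm N (m i) (restr (E i) x) ≤ Tf N x := by
    calc ∑ i, tnorm N (m i) (restr (E i) x)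
        ≤ ∑ i, Tf N (restr (E i) x) :=
          Finset.sum_le_sum fun i _ => tnorm_le_Tf hN _ _
      _ ≤ Tf N x := sum_Tf_restr_le hN E hAdm.2.2.1 x
  rcases le_or_gt (∑ i, tnorm N (m i) (restr (E i) x)) 0 with h | h
  · calc (1 / f ℓ) * ∑ i, tnorm N (m i) (restr (E i) x)
        ≤ 0 := mul_nonpos_of_nonneg_of_nonpos one_div_f_mem.1 h
      _ ≤ Tf N x := Tf_nonneg hN x
  · calc (1 / f ℓ) * ∑ i, tnorm N (m i) (restr (E i) x)
        ≤ 1 * ∑ i, tnorm N (m i) (restr (E i) x) :=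
          mul_le_mul_of_nonneg_right one_div_f_mem.2 h.le
      _ ≤ Tf N x := by rw [one_mul]; exact hsum

lemma global_bddAbove (hN : IsNorm N) (x : C00) :
    BddAbove {r | ∃ (ℓ : ℕ) (m : Fin ℓ → ℕ) (E : Fin ℓ → Finset ℕ), Admissible ℓ m E ∧
      r = (1 / f ℓ) * ∑ i, tnorm N (m i) (restr (E i) x)} :=
  ⟨Tf N x, fun r hr => global_le_Tf hN x r hr⟩

lemma sSup_global_le_N (hN : IsNorm N) (hEq : Eq22 N) (x : C00) :
    sSup {r | ∃ (ℓ : ℕ) (m : Fin ℓ → ℕ) (E : Fin ℓ → Finset ℕ), Admissible ℓ m E ∧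
      r = (1 / f ℓ) * ∑ i, tnorm N (m i) (restr (E i) x)} ≤ N x := by
  rw [hEq x]; exact le_max_right _ _

lemma supNorm_le_N (hN : IsNorm N) (hEq : Eq22 N) (x : C00) : supNorm x ≤ N x := by
  rw [hEq x]; exact le_max_left _ _

lemma abs_apply_bdd (x : C00) : ∀ i, |x i| ≤ ∑ j ∈ x.support, |x j| := by
  intro i
  by_cases hi : i ∈ x.support
  · exact Finset.single_le_sum (fun j _ => abs_nonneg (x j)) hi
  · have h : x i = 0 := Finsupp.notMem_support_iff.1 hi
    rw [h, abs_zero]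
    exact Finset.sum_nonneg fun j _ => abs_nonneg (x j)

lemma supNorm_restr_le (E : Finset ℕ) (x : C00) : supNorm (restr E x) ≤ supNorm x := by
  apply ciSup_mono ⟨∑ j ∈ x.support, |x j|, fun r ⟨i, hi⟩ => hi ▸ abs_apply_bdd x i⟩
  intro i
  rw [restr_apply]
  split
  · exact le_refl _
  · rw [abs_zero]; exact abs_nonneg _

end three

section four
variable {N : C00 → ℝ}

lemma Admissible.inter {ℓ : ℕ} {m : Fin ℓ → ℕ} {E : Fin ℓ → Finset ℕ}
    (h : Admissible ℓ m E) (A : Finset ℕ) : Admissible ℓ m (fun i => E i ∩ A) := by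
  obtain ⟨h1, h2, h3, h4⟩ := h
  refine ⟨h1, h2, ?_, ?_⟩
  · intro i j hij a ha b hb
    exact h3 i j hij a (Finset.mem_of_mem_inter_left ha) b (Finset.mem_of_mem_inter_left hb)
  · intro i j hij
    refine lt_of_le_of_lt ?_ (h4 i j hij)
    apply Finset.sum_le_sum
    intro t _
    exact_mod_cast Finset.card_le_card (Finset.inter_subset_left)

lemma N_restr_le (hN : IsNorm N) (hEq : Eq22 N) (E : Finset ℕ) (x : C00) :
    N (restr E x) ≤ N x := by
  rw [hEq (restr E x)]
  apply max_le
  · exact (supNorm_restr_le E x).trans (supNorm_le_N hN hEq x)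
  · apply Real.sSup_le _ (N_nonneg hN x)
    rintro r ⟨ℓ, m, Efam, hAdm, rfl⟩
    have hmem : (1 / f ℓ) * ∑ i, tnorm N (m i) (restr (Efam i) (restr E x)) ∈
        {r | ∃ (ℓ : ℕ) (m : Fin ℓ → ℕ) (E' : Fin ℓ → Finset ℕ), Admissible ℓ m E' ∧
          r = (1 / f ℓ) * ∑ i, tnorm N (m i) (restr (E' i) x)} := by
      refine ⟨ℓ, m, fun i => Efam i ∩ E, hAdm.inter E, ?_⟩
      congr 1
      refine Finset.sum_congr rfl fun i _ => ?_
      rw [restr_restr]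
    exact (le_csSup (global_bddAbove hN x) hmem).trans (sSup_global_le_N hN hEq x)

lemma tnorm_le_N (hN : IsNorm N) (hEq : Eq22 N) {m : ℕ} (hm : 1 ≤ m) (y : C00) :
    tnorm N m y ≤ N y := by
  apply tnorm_le_bound hN (N_nonneg hN y)
  intro F _
  have hsum : ∑ i, N (restr (F i) y) ≤ (m : ℝ) * N y := by
    calc ∑ i, N (restr (F i) y) ≤ ∑ _i : Fin m, N y :=
          Finset.sum_le_sum fun i _ => N_restr_le hN hEq (F i) y
      _ = (m : ℝ) * N y := by rw [Finset.sum_const, Finset.card_univ, Fintype.card_fin,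
          nsmul_eq_mul]
  have hm' : (0:ℝ) < m := by exact_mod_cast hm
  calc (1 / (m:ℝ)) * ∑ i, N (restr (F i) y) ≤ (1 / (m:ℝ)) * ((m:ℝ) * N y) := by
        apply mul_le_mul_of_nonneg_left hsum (by positivity)
    _ = N y := by field_simp

end four

section five

/-- the staircase pair-counting lemma. -/
lemma pair_count {m k : ℕ} (G : Fin m → Finset ℕ) (Y : Fin k → Finset ℕ)
    (hG : ∀ i j : Fin m, i < j → FinsetLT (G i) (G j))
    (hY : ∀ i j : Fin k, i < j → FinsetLT (Y i) (Y j)) :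
    ((Finset.univ : Finset (Fin m × Fin k)).filter
      (fun p => ((G p.1) ∩ (Y p.2)).Nonempty)).card ≤ m + k := by
  have key : ∀ p ∈ (Finset.univ : Finset (Fin m × Fin k)).filter
      (fun p => ((G p.1) ∩ (Y p.2)).Nonempty),
      ∀ q ∈ (Finset.univ : Finset (Fin m × Fin k)).filter
      (fun p => ((G p.1) ∩ (Y p.2)).Nonempty), p.1 < q.1 → p.2 ≤ q.2 := by
    intro p hp q hq h1
    by_contra h2
    push_neg at h2
    obtain ⟨a, ha⟩ := (Finset.mem_filter.1 hp).2
    obtain ⟨b, hb⟩ := (Finset.mem_filter.1 hq).2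
    rw [Finset.mem_inter] at ha hb
    have hab : a < b := hG p.1 q.1 h1 a ha.1 b hb.1
    have hba : b < a := hY q.2 p.2 h2 b hb.2 a ha.2
    omega
  apply le_trans (Finset.card_le_card_of_injOn (fun p => (p.1 : ℕ) + (p.2 : ℕ))
    (t := Finset.range (m + k)) ?_ ?_) (by rw [Finset.card_range])
  · rintro ⟨i, j⟩ _
    simp only [Finset.mem_coe, Finset.mem_range]
    omega
  · rintro ⟨i, j⟩ hp ⟨i', j'⟩ hq hsum
    simp only at hsum
    rcases lt_trichotomy i i' with h | h | h
    · have := key _ hp _ hq h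
      simp only [Fin.lt_iff_val_lt_val, Fin.le_iff_val_le_val] at h this ⊢
      have : (j' : ℕ) = j + (i' - i) := by omega
      ext <;> simp <;> omega
    · have hj : j = j' := by
        apply Fin.ext
        have : (i:ℕ) = i' := by rw [h]
        omega
      rw [h, hj]
    · have := key _ hq _ hp h
      simp only [Fin.lt_iff_val_lt_val, Fin.le_iff_val_le_val] at h this ⊢
      ext <;> simp <;> omega

end five

section six
variable {N : C00 → ℝ}

lemma avg_sum_bound (hN : IsNorm N) (hEq : Eq22 N) {k m : ℕ} {y : Fin k → C00}
    (hy : BlockSeqFin y) (h1 : ∀ s, N (y s) = 1) (G : Fin m → Finset ℕ)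
    (hG : ∀ i j : Fin m, i < j → FinsetLT (G i) (G j)) :
    ∑ j, N (restr (G j) (∑ s, y s)) ≤ (m : ℝ) + k := by
  have step : ∀ j, N (restr (G j) (∑ s, y s)) ≤
      ∑ s, (if ((G j) ∩ (y s).support).Nonempty then (1:ℝ) else 0) := by
    intro j
    rw [restr_sum]
    refine (N_sum_le hN _ _).trans (Finset.sum_le_sum fun s _ => ?_)
    by_cases hc : ((G j) ∩ (y s).support).Nonempty
    · rw [if_pos hc]
      calc N (restr (G j) (y s)) ≤ N (y s) := N_restr_le hN hEq _ _
        _ = 1 := h1 s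
    · rw [if_neg hc]
      have h0 : restr (G j) (y s) = 0 :=
        restr_eq_zero (fun a ha hb => hc ⟨a, Finset.mem_inter.2 ⟨hb, ha⟩⟩)
      rw [h0, N_zero hN]
  calc ∑ j, N (restr (G j) (∑ s, y s))
      ≤ ∑ j, ∑ s, (if ((G j) ∩ (y s).support).Nonempty then (1:ℝ) else 0) :=
        Finset.sum_le_sum fun j _ => step j
    _ = ∑ p : Fin m × Fin k, (if ((G p.1) ∩ (y p.2).support).Nonempty then (1:ℝ) else 0) := by
        rw [← Finset.univ_product_univ, Finset.sum_product]
    _ = ((Finset.univ.filter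
        (fun p : Fin m × Fin k => ((G p.1) ∩ (y p.2).support).Nonempty)).card : ℝ) := by
        rw [Finset.sum_boole]
    _ ≤ (m : ℝ) + k := by
        have := pair_count G (fun s => (y s).support) hG hy.2
        exact_mod_cast this

lemma avg_restr_sum (hN : IsNorm N) (hEq : Eq22 N) {k : ℕ} (hk : 1 ≤ k)
    {y : Fin k → C00} (hy : BlockSeqFin y) (h1 : ∀ s, N (y s) = 1) {xt : C00}
    (hxt : xt = ((k : ℝ) ^ (-(1/(1:ℝ)))) • ∑ s, y s)
    {m : ℕ} (G : Fin m → Finset ℕ)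
    (hG : ∀ i j : Fin m, i < j → FinsetLT (G i) (G j)) :
    ∑ j, N (restr (G j) xt) ≤ ((m:ℝ) + k) / k := by
  have hkpos : (0:ℝ) < k := by exact_mod_cast hk
  have hc : ((k : ℝ) ^ (-(1/(1:ℝ)))) = (k:ℝ)⁻¹ := by norm_num [Real.rpow_neg_one]
  calc ∑ j, N (restr (G j) xt)
      = ∑ j, (k:ℝ)⁻¹ * N (restr (G j) (∑ s, y s)) := by
        refine Finset.sum_congr rfl fun j _ => ?_
        rw [hxt, hc, restr_smul, hN.2.1]
        congr 1
        rw [abs_of_pos (by positivity)]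
    _ = (k:ℝ)⁻¹ * ∑ j, N (restr (G j) (∑ s, y s)) := by rw [Finset.mul_sum]
    _ ≤ (k:ℝ)⁻¹ * ((m : ℝ) + k) := by
        apply mul_le_mul_of_nonneg_left (avg_sum_bound hN hEq hy h1 G hG) (by positivity)
    _ = ((m:ℝ) + k) / k := by rw [div_eq_inv_mul]

end six

section seven
variable {N : C00 → ℝ}

lemma k_ge_one {n : ℕ} {x : Fin n → C00} (hx : BlockSeqFin x) {k : Fin n → ℕ}
    (havg : ∀ i, IsLpAverage N 1 (k i) 2 (x i)) : ∀ t, 1 ≤ k t := by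
  intro t
  by_contra h
  push_neg at h
  have hk0 : k t = 0 := Nat.lt_one_iff.1 h
  obtain ⟨y, _, _, _, hxt⟩ := havg t
  apply hx.1 t
  have he : IsEmpty (Fin (k t)) := by rw [hk0]; infer_instance
  have hs : ∑ i : Fin (k t), y i = 0 := by rw [Finset.univ_eq_empty, Finset.sum_empty]
  rw [hxt, hs, smul_zero]

/-- (iii): every coordinate of `z` has small norm. -/
lemma coord_small (hN : IsNorm N) (hEq : Eq22 N)
    {n : ℕ} {x : Fin n → C00} (hx : BlockSeqFin x) {k : Fin n → ℕ}
    (havg : ∀ i, IsLpAverage N 1 (k i) 2 (x i))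
    {k0 : ℕ} (hk0 : IsLeast (Set.range k) k0) (hk01 : 1 ≤ k0)
    {a : Fin n → ℝ} (ha : ∀ i, |a i| ≤ 1) :
    ∀ j ∈ (∑ i, a i • x i).support, N (restr {j} (∑ i, a i • x i)) ≤ 1 / (k0:ℝ) := by
  intro j hj
  set z := ∑ i, a i • x i with hz
  have hex : ∃ t, j ∈ (x t).support := by
    by_contra hcon
    push_neg at hcon
    have hz0 : z j = 0 := by
      rw [hz, Finsupp.finset_sum_apply]
      refine Finset.sum_eq_zero fun t _ => ?_
      rw [Finsupp.smul_apply, Finsupp.notMem_support_iff.1 (hcon t), smul_zero]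
    exact (Finsupp.mem_support_iff.1 hj) hz0
  obtain ⟨t, hjt⟩ := hex
  obtain ⟨y, hy, hy1, _, hxt⟩ := havg t
  have hkt : 1 ≤ k t := k_ge_one hx havg t
  have hktpos : (0:ℝ) < k t := by exact_mod_cast hkt
  have hc : ((k t : ℝ) ^ (-(1/(1:ℝ)))) = ((k t):ℝ)⁻¹ := by norm_num [Real.rpow_neg_one]
  have hcne : ((k t : ℝ) ^ (-(1/(1:ℝ)))) ≠ 0 := by rw [hc]; positivity
  have hsupp : (x t).support = Finset.univ.biUnion (fun s => (y s).support) := by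
    rw [hxt, Finsupp.support_smul_eq hcne, Finsupp.support_sum_eq_biUnion]
    intro i1 i2 h12
    exact pairwise_disjoint_of_LT hy.2 i1 (Finset.mem_univ _) i2 (Finset.mem_univ _) h12
  obtain ⟨s, _, hjs⟩ := Finset.mem_biUnion.1 (hsupp ▸ hjt)
  set S := (y s).support with hS
  have hSx : S ⊆ (x t).support := by
    rw [hsupp]
    exact fun i hi => Finset.mem_biUnion.2 ⟨s, Finset.mem_univ _, hi⟩
  have hres : restr S z = (a t * ((k t):ℝ)⁻¹) • (y s) := by
    rw [hz, restr_sum, Finset.sum_eq_single t]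
    · rw [restr_smul, hxt, restr_smul, restr_sum, Finset.sum_eq_single s]
      · rw [restr_eq_self (le_refl S), hc, smul_smul]
      · intro s' _ hs'
        apply restr_eq_zero
        intro i hi
        rcases lt_or_gt_of_ne hs' with h' | h'
        · intro hiS
          exact lt_irrefl i (hy.2 s' s h' i hi i hiS)
        · intro hiS
          exact lt_irrefl i (hy.2 s s' h' i hiS i hi)
      · intro hs; exact absurd (Finset.mem_univ s) hs
    · intro t' _ ht'
      have hres0 : restr S (x t') = 0 := by
        apply restr_eq_zero
        intro i hi hiS
        rcases lt_or_gt_of_ne ht' with h' | h'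
        · exact lt_irrefl i (hx.2 t' t h' i hi i (hSx hiS))
        · exact lt_irrefl i (hx.2 t t' h' i (hSx hiS) i hi)
      rw [restr_smul, hres0, smul_zero]
    · intro ht; exact absurd (Finset.mem_univ t) ht
  have hNS : N (restr S z) ≤ 1 / (k0:ℝ) := by
    rw [hres, hN.2.1, hy1 s, mul_one, abs_mul]
    have h1 : |a t| ≤ 1 := ha t
    have h2 : |((k t):ℝ)⁻¹| = ((k t):ℝ)⁻¹ := abs_of_pos (by positivity)
    rw [h2]
    have h3 : ((k t):ℝ)⁻¹ ≤ 1 / (k0:ℝ) := by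
      rw [inv_eq_one_div]
      apply one_div_le_one_div_of_le (by exact_mod_cast hk01)
      exact_mod_cast hk0.2 ⟨t, rfl⟩
    calc |a t| * ((k t):ℝ)⁻¹ ≤ 1 * ((k t):ℝ)⁻¹ :=
          mul_le_mul_of_nonneg_right h1 (by positivity)
      _ = ((k t):ℝ)⁻¹ := one_mul _
      _ ≤ 1 / (k0:ℝ) := h3
  have hjrw : restr {j} z = restr {j} (restr S z) := by
    rw [restr_restr, Finset.singleton_inter_of_mem hjs]
  rw [hjrw]
  exact (N_restr_le hN hEq _ _).trans hNS

/-- (iv): restrictions of `z` to small sets are small. -/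
lemma restr_card_small (hN : IsNorm N) (hEq : Eq22 N)
    {n : ℕ} {x : Fin n → C00} (hx : BlockSeqFin x) {k : Fin n → ℕ}
    (havg : ∀ i, IsLpAverage N 1 (k i) 2 (x i))
    {k0 : ℕ} (hk0 : IsLeast (Set.range k) k0) (hk01 : 1 ≤ k0)
    {a : Fin n → ℝ} (ha : ∀ i, |a i| ≤ 1) (E : Finset ℕ) :
    N (restr E (∑ i, a i • x i)) ≤ (E.card : ℝ) / (k0:ℝ) := by
  set z := ∑ i, a i • x i with hz
  calc N (restr E z) ≤ ∑ j ∈ z.support.filter (· ∈ E), N (restr {j} z) :=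
        N_restr_le_sum hN E z
    _ ≤ (z.support.filter (· ∈ E)).card • (1 / (k0:ℝ)) := by
        apply Finset.sum_le_card_nsmul
        intro j hj
        exact coord_small hN hEq hx havg hk0 hk01 ha j (Finset.mem_filter.1 hj).1
    _ ≤ (E.card : ℝ) / (k0:ℝ) := by
        rw [nsmul_eq_mul]
        have hcard : (z.support.filter (· ∈ E)).card ≤ E.card := by
          apply Finset.card_le_card
          intro j hj
          exact (Finset.mem_filter.1 hj).2
        have : ((z.support.filter (· ∈ E)).card : ℝ) ≤ (E.card : ℝ) := by exact_mod_cast hcard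
        calc ((z.support.filter (· ∈ E)).card : ℝ) * (1 / (k0:ℝ))
            ≤ (E.card : ℝ) * (1 / (k0:ℝ)) := by
              apply mul_le_mul_of_nonneg_right this (by positivity)
          _ = (E.card : ℝ) / (k0:ℝ) := by ring

/-- (v): the tnorm bound. -/
lemma tnorm_bound (hN : IsNorm N) (hEq : Eq22 N)
    {n : ℕ} {x : Fin n → C00} (hx : BlockSeqFin x) {k : Fin n → ℕ}
    (havg : ∀ i, IsLpAverage N 1 (k i) 2 (x i))
    {k0 : ℕ} (hk0 : IsLeast (Set.range k) k0) (hk01 : 1 ≤ k0)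
    {a : Fin n → ℝ} (ha : ∀ i, |a i| ≤ 1) {m : ℕ} (hm : 1 ≤ m) (E : Finset ℕ) :
    tnorm N m (restr E (∑ i, a i • x i)) ≤ (n:ℝ) / k0 + (n:ℝ) / m := by
  set z := ∑ i, a i • x i with hz
  have hmpos : (0:ℝ) < m := by exact_mod_cast hm
  have hk0pos : (0:ℝ) < k0 := by exact_mod_cast hk01
  apply tnorm_le_bound hN (by positivity)
  intro F hF
  set G : Fin m → Finset ℕ := fun j => F j ∩ E with hG
  have hGlt : ∀ i j : Fin m, i < j → FinsetLT (G i) (G j) := by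
    intro i j hij p hp q hq
    exact hF i j hij p (Finset.mem_of_mem_inter_left hp) q (Finset.mem_of_mem_inter_left hq)
  have hstep : ∀ j, N (restr (F j) (restr E z)) ≤ ∑ t, |a t| * N (restr (G j) (x t)) := by
    intro j
    rw [restr_restr]
    show N (restr (G j) z) ≤ _
    rw [hz, restr_sum]
    refine (N_sum_le hN _ _).trans (Finset.sum_le_sum fun t _ => ?_)
    rw [restr_smul, hN.2.1]
  have hsum : ∑ j, N (restr (F j) (restr E z)) ≤ (n:ℝ) * ((m:ℝ)/k0 + 1) := by
    calc ∑ j, N (restr (F j) (restr E z))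
        ≤ ∑ j, ∑ t, |a t| * N (restr (G j) (x t)) := Finset.sum_le_sum fun j _ => hstep j
      _ = ∑ t, ∑ j, |a t| * N (restr (G j) (x t)) := Finset.sum_comm
      _ ≤ ∑ t : Fin n, ((m:ℝ)/k0 + 1) := by
          refine Finset.sum_le_sum fun t _ => ?_
          obtain ⟨y, hy, hy1, _, hxt⟩ := havg t
          have hkt : 1 ≤ k t := k_ge_one hx havg t
          have hktpos : (0:ℝ) < k t := by exact_mod_cast hkt
          have hbound := avg_restr_sum hN hEq hkt hy hy1 hxt G hGlt
          calc ∑ j, |a t| * N (restr (G j) (x t))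
              = |a t| * ∑ j, N (restr (G j) (x t)) := by rw [Finset.mul_sum]
            _ ≤ 1 * (((m:ℝ) + k t) / k t) := by
                apply mul_le_mul (ha t) hbound
                  (Finset.sum_nonneg fun j _ => N_nonneg hN _) zero_le_one
            _ = (m:ℝ)/(k t) + 1 := by field_simp
            _ ≤ (m:ℝ)/k0 + 1 := by
                have hle : (k0:ℝ) ≤ k t := by exact_mod_cast hk0.2 ⟨t, rfl⟩
                have : (m:ℝ)/(k t) ≤ (m:ℝ)/k0 :=
                  div_le_div_of_nonneg_left (by positivity) hk0pos hle
                linarith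
      _ = (n:ℝ) * ((m:ℝ)/k0 + 1) := by
          rw [Finset.sum_const, Finset.card_univ, Fintype.card_fin, nsmul_eq_mul]
  calc (1 / (m:ℝ)) * ∑ j, N (restr (F j) (restr E z))
      ≤ (1 / (m:ℝ)) * ((n:ℝ) * ((m:ℝ)/k0 + 1)) :=
        mul_le_mul_of_nonneg_left hsum (by positivity)
    _ = (n:ℝ) / k0 + (n:ℝ) / m := by field_simp

end seven

section eight
variable {N : C00 → ℝ}

lemma f_nat_le (m : ℕ) : f m ≤ (m:ℝ) := by
  unfold f
  rw [Real.logb_le_iff_le_rpow one_lt_two (by positivity)]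
  rw [show ((m:ℝ)) = ((m:ℕ):ℝ) from rfl, Real.rpow_natCast]
  have h1 : m + 1 ≤ 2^m := Nat.lt_two_pow_self
  have h2 : (m:ℝ) + 1 ≤ (2:ℝ)^m := by exact_mod_cast h1
  linarith

theorem statement9_aux (hN : IsNorm N) (hEq : Eq22 N)
    (n : ℕ) (x : Fin n → C00) (hx : BlockSeqFin x)
    (k : Fin n → ℕ) (havg : ∀ i, IsLpAverage N 1 (k i) 2 (x i))
    (k0 : ℕ) (hk0 : IsLeast (Set.range k) k0)
    (ℓ : ℕ) (a : Fin n → ℝ) (ha : ∀ i, |a i| ≤ 1) :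
    normL N ℓ (∑ i, a i • x i)
      ≤ (1 / f ℓ) * (N (∑ i, a i • x i) + 6 * ℓ * n * (k0 : ℝ) ^ (-(1 / 2) : ℝ)) := by
  obtain ⟨⟨t0, ht0⟩, hlb⟩ := hk0
  have hn1 : 1 ≤ n := t0.pos
  have hk01 : 1 ≤ k0 := ht0 ▸ k_ge_one hx havg t0
  have hk0R : (1:ℝ) ≤ (k0:ℝ) := by exact_mod_cast hk01
  set z := ∑ i, a i • x i with hz
  set K := Real.sqrt k0 with hK
  have hK1 : 1 ≤ K := by
    rw [hK, show (1:ℝ) = Real.sqrt 1 by rw [Real.sqrt_one]]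
    exact Real.sqrt_le_sqrt hk0R
  have hKpos : 0 < K := lt_of_lt_of_le one_pos hK1
  have hKsq : K * K = (k0:ℝ) := Real.mul_self_sqrt (by positivity)
  have hrpow : (k0 : ℝ) ^ (-(1 / 2) : ℝ) = 1 / K := by
    rw [Real.rpow_neg (by positivity), hK, Real.sqrt_eq_rpow]
    exact (one_div _).symm
  have hNz : 0 ≤ N z := N_nonneg hN z
  have herr : (0:ℝ) ≤ 6 * ℓ * n * (k0 : ℝ) ^ (-(1 / 2) : ℝ) := by
    rw [hrpow]; positivity
  apply Real.sSup_le _ (by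
    apply mul_nonneg one_div_f_mem.1
    linarith)
  rintro r ⟨m, E, hAdm, rfl⟩
  have hk0' : IsLeast (Set.range k) k0 := ⟨⟨t0, ht0⟩, hlb⟩
  suffices key : ∑ i, tnorm N (m i) (restr (E i) z) ≤ N z + 6 * ℓ * n * (k0 : ℝ) ^ (-(1 / 2) : ℝ) by
    exact mul_le_mul_of_nonneg_left key one_div_f_mem.1
  rw [hrpow, mul_one_div]
  -- big indices bound
  have hbig : ∀ i : Fin ℓ, K ≤ (m i:ℝ) → tnorm N (m i) (restr (E i) z) ≤ 2*n/K := by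
    intro i hi
    have h2 : 1 ≤ m i := le_trans one_le_two (hAdm.1 i)
    have hmpos : (0:ℝ) < m i := by exact_mod_cast h2
    have hb := tnorm_bound hN hEq hx havg hk0' hk01 ha h2 (E i)
    have hKk0 : K ≤ (k0:ℝ) := by
      calc K = 1 * K := (one_mul K).symm
        _ ≤ K * K := mul_le_mul_of_nonneg_right hK1 hKpos.le
        _ = (k0:ℝ) := hKsq
    have h1 : (n:ℝ)/k0 ≤ (n:ℝ)/K := div_le_div_of_nonneg_left (by positivity) hKpos hKk0
    have h2' : (n:ℝ)/(m i) ≤ (n:ℝ)/K := div_le_div_of_nonneg_left (by positivity) hKpos hi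
    calc tnorm N (m i) (restr (E i) z) ≤ (n:ℝ)/k0 + (n:ℝ)/(m i) := hb
      _ ≤ (n:ℝ)/K + (n:ℝ)/K := by linarith
      _ = 2*n/K := by ring
  set P := Finset.univ.filter (fun i : Fin ℓ => ((m i:ℝ) < K)) with hP
  have herase : ∀ (p : Fin ℓ), (∀ i ∈ Finset.univ.erase p,
      tnorm N (m i) (restr (E i) z) ≤ 2*n/K) →
      tnorm N (m p) (restr (E p) z) ≤ N z →
      ∑ i, tnorm N (m i) (restr (E i) z) ≤ N z + 6 * ℓ * n / K := by
    intro p hrest hp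
    have hsplit : ∑ i, tnorm N (m i) (restr (E i) z) =
        tnorm N (m p) (restr (E p) z) + ∑ i ∈ Finset.univ.erase p, tnorm N (m i) (restr (E i) z) :=
      (Finset.add_sum_erase _ _ (Finset.mem_univ p)).symm
    rw [hsplit]
    have hcard : ((Finset.univ.erase p).card : ℝ) ≤ (ℓ:ℝ) := by
      have : (Finset.univ.erase p).card ≤ ℓ := by
        calc (Finset.univ.erase p).card ≤ (Finset.univ : Finset (Fin ℓ)).card :=
              Finset.card_le_card (Finset.erase_subset _ _)
          _ = ℓ := by rw [Finset.card_univ, Fintype.card_fin]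
      exact_mod_cast this
    have hrest' : ∑ i ∈ Finset.univ.erase p, tnorm N (m i) (restr (E i) z)
        ≤ ((Finset.univ.erase p).card : ℝ) * (2*n/K) := by
      have := Finset.sum_le_card_nsmul _ _ _ hrest
      rwa [nsmul_eq_mul] at this
    have h2n : (0:ℝ) ≤ 2*n/K := by positivity
    have hfin : ((Finset.univ.erase p).card : ℝ) * (2*n/K) ≤ 6 * ℓ * n / K := by
      calc ((Finset.univ.erase p).card : ℝ) * (2*n/K) ≤ (ℓ:ℝ) * (2*n/K) :=
            mul_le_mul_of_nonneg_right hcard h2n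
        _ = (2 * ℓ * n) / K := by ring
        _ ≤ 6 * ℓ * n / K := by
            rw [div_le_div_iff_of_pos_right hKpos]
            nlinarith [(Nat.cast_nonneg ℓ : (0:ℝ) ≤ ℓ), (Nat.cast_nonneg n : (0:ℝ) ≤ n)]
    linarith
  by_cases hPne : P.Nonempty
  · set p := P.max' hPne with hp
    have hpP : p ∈ P := P.max'_mem hPne
    have hmp : (m p : ℝ) < K := (Finset.mem_filter.1 hpP).2
    apply herase p
    · intro i hi
      have hip : i ≠ p := (Finset.mem_erase.1 hi).1
      by_cases hiP : i ∈ P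
      · -- small, not maximal
        have hilt : i < p := lt_of_le_of_ne (P.le_max' i hiP) hip
        have hltℕ : (i:ℕ) + 1 < ℓ := by
          have h1 : (i:ℕ) < (p:ℕ) := hilt
          have h2 := p.isLt
          omega
        set j : Fin ℓ := ⟨(i:ℕ)+1, hltℕ⟩ with hj
        have hsum := hAdm.2.2.2 i j rfl
        have hEi : ((E i).card : ℝ) ≤ ∑ t ∈ Finset.Iic i, ((E t).card:ℝ) :=
          Finset.single_le_sum (f := fun t => ((E t).card : ℝ))
            (fun t _ => by positivity) (Finset.mem_Iic.2 le_rfl)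
        have hjp : j ≤ p := by
          have : (j:ℕ) ≤ (p:ℕ) := by
            have h1 : (i:ℕ) < (p:ℕ) := hilt
            simp only [hj]
            omega
          exact this
        have hmj : (m j : ℝ) ≤ (m p : ℝ) := by exact_mod_cast hAdm.2.1.monotone hjp
        have hcard : ((E i).card : ℝ) ≤ K := by
          have := f_nat_le (m j)
          linarith
        have hm1 : 1 ≤ m i := le_trans one_le_two (hAdm.1 i)
        calc tnorm N (m i) (restr (E i) z) ≤ N (restr (E i) z) := tnorm_le_N hN hEq hm1 _
          _ ≤ ((E i).card : ℝ) / k0 := restr_card_small hN hEq hx havg hk0' hk01 ha (E i)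
          _ ≤ K / (k0:ℝ) := by
              rw [div_le_div_iff_of_pos_right (by positivity : (0:ℝ) < (k0:ℝ))]
              exact hcard
          _ = 1 / K := by rw [← hKsq]; field_simp
          _ ≤ 2*n/K := by
              rw [div_le_div_iff_of_pos_right hKpos]
              have : (1:ℝ) ≤ n := by exact_mod_cast hn1
              linarith
      · have hKm : K ≤ (m i : ℝ) := by
          have : ¬ ((m i:ℝ) < K) := fun hlt => hiP (Finset.mem_filter.2 ⟨Finset.mem_univ i, hlt⟩)
          linarith [not_lt.1 this]
        exact hbig i hKm
    · have hm1 : 1 ≤ m p := le_trans one_le_two (hAdm.1 p)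
      calc tnorm N (m p) (restr (E p) z) ≤ N (restr (E p) z) := tnorm_le_N hN hEq hm1 _
        _ ≤ N z := N_restr_le hN hEq _ _
  · -- no small indices
    have hall : ∀ i ∈ (Finset.univ : Finset (Fin ℓ)), tnorm N (m i) (restr (E i) z) ≤ 2*n/K := by
      intro i _
      apply hbig
      have : ¬ ((m i:ℝ) < K) := fun hlt => hPne ⟨i, Finset.mem_filter.2 ⟨Finset.mem_univ i, hlt⟩⟩
      linarith [not_lt.1 this]
    have hsum : ∑ i, tnorm N (m i) (restr (E i) z) ≤ (ℓ:ℝ) * (2*n/K) := by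
      have := Finset.sum_le_card_nsmul _ _ _ hall
      rwa [nsmul_eq_mul, Finset.card_univ, Fintype.card_fin] at this
    have heq : (ℓ:ℝ) * (2*n/K) = (2 * ℓ * n) / K := by ring
    have : (ℓ:ℝ) * (2*n/K) ≤ 6 * ℓ * n / K := by
      rw [heq, div_le_div_iff_of_pos_right hKpos]
      nlinarith [(Nat.cast_nonneg ℓ : (0:ℝ) ≤ ℓ), (Nat.cast_nonneg n : (0:ℝ) ≤ n)]
    linarith

end eight


/-- Lemma 2.5. -/
theorem statement9 (N : C00 → ℝ) (hN : IsNorm N) (hEq : Eq22 N)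
    (n : ℕ) (x : Fin n → C00) (hx : BlockSeqFin x)
    (k : Fin n → ℕ) (havg : ∀ i, IsLpAverage N 1 (k i) 2 (x i))
    (k0 : ℕ) (hk0 : IsLeast (Set.range k) k0)
    (ℓ : ℕ) (a : Fin n → ℝ) (ha : ∀ i, |a i| ≤ 1) :
    normL N ℓ (∑ i, a i • x i)
      ≤ (1 / f ℓ) * (N (∑ i, a i • x i) + 6 * ℓ * n * (k0 : ℝ) ^ (-(1 / 2) : ℝ)) := statement9_aux hN hEq n x hx k havg k0 hk0 ℓ a ha
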